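/- Let G be a finite group, N ⊴ G, and A ⊴ G with A ⊆ N. If G is relative almost monomial with respect to N, then G/A is relative almost monomial with respect to N/A. -/

import Mathlib

open scoped Classical

noncomputable section

/-- The inner product of two class functions on a finite group. -/
def cdot (G : Type*) [Group G] [Finite G] (f h : G → ℂ) : ℂ :=
  (Nat.card G : ℂ)⁻¹ * ∑ᶠ g : G, f g * (starRingEnd ℂ) (h g)

/-- `f` is the character of a finite-dimensional complex representation of `G`. -/
def IsChar (G : Type*) [Group G] (f : G → ℂ) : Prop :=
  ∃ (n : ℕ) (ρ : G →* Matrix.GeneralLinearGroup (Fin n) ℂ),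
    f = fun g => Matrix.trace ((ρ g : Matrix (Fin n) (Fin n) ℂ))

/-- `f` is a linear (degree one) character of `G`. -/
def IsLinearChar (G : Type*) [Group G] (f : G → ℂ) : Prop :=
  ∃ ρ : G →* ℂˣ, f = fun g => (ρ g : ℂ)

/-- `f` is an irreducible character of `G`: a character of norm one. -/
def IsIrrChar (G : Type*) [Group G] [Finite G] (f : G → ℂ) : Prop :=
  IsChar G f ∧ cdot G f f = 1

/-- The class function on `G` induced from a class function on a subgroup `H`. -/
def ind {G : Type*} [Group G] [Finite G] (H : Subgroup G) (f : H → ℂ) : G → ℂ :=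
  fun g => (Nat.card H : ℂ)⁻¹ *
    ∑ᶠ x : G, if h : x * g * x⁻¹ ∈ H then f ⟨x * g * x⁻¹, h⟩ else 0

/-- Restriction of a class function on `G` to a subgroup `H`. -/
def res {G : Type*} [Group G] (H : Subgroup G) (f : G → ℂ) : H → ℂ := fun x => f x

/-- Restriction of a class function on a subgroup `K` to a smaller subgroup `H ≤ K`. -/
def resTo {G : Type*} [Group G] {K H : Subgroup G} (hHK : H ≤ K) (f : K → ℂ) : H → ℂ :=
  fun x => f ⟨x.1, hHK x.2⟩

/-- Induction of a class function from a subgroup `H` to a larger subgroup `K`. -/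
def indTo {G : Type*} [Group G] [Finite G] (K H : Subgroup G) (f : H → ℂ) : K → ℂ :=
  ind (H.subgroupOf K) fun y => f ⟨y.1.1, Subgroup.mem_subgroupOf.mp y.2⟩

/-- `G` is almost monomial. -/
def IsAlmostMonomial (G : Type*) [Group G] [Finite G] : Prop :=
  ∀ χ φ : G → ℂ, IsIrrChar G χ → IsIrrChar G φ → χ ≠ φ →
    ∃ (H : Subgroup G) (l : H → ℂ), IsLinearChar H l ∧
      cdot G (ind H l) χ ≠ 0 ∧ cdot G (ind H l) φ = 0

/-- `G` is relative almost monomial with respect to the (normal) subgroup `N`. -/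
def IsRelAlmostMonomial (G : Type*) [Group G] [Finite G] (N : Subgroup G) : Prop :=
  ∀ χ φ : G → ℂ, IsIrrChar G χ → IsIrrChar G φ → χ ≠ φ →
    ∃ (H : Subgroup G) (hNH : N ≤ H) (ψ : H → ℂ), IsIrrChar H ψ ∧
      IsIrrChar N (resTo hNH ψ) ∧
      cdot G (ind H ψ) χ ≠ 0 ∧ cdot G (ind H ψ) φ = 0

/-- `H` is a subnormal subgroup of `G`. -/
def IsSubnormalSubgroup (G : Type*) [Group G] (H : Subgroup G) : Prop :=
  ∃ (n : ℕ) (c : Fin (n + 1) → Subgroup G), c 0 = H ∧ c (Fin.last n) = ⊤ ∧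
    ∀ i : Fin n, ((c i.castSucc).subgroupOf (c i.succ)).Normal

/-- `G` is normally almost monomial. -/
def IsNormallyAlmostMonomial (G : Type*) [Group G] [Finite G] : Prop :=
  ∀ χ φ : G → ℂ, IsIrrChar G χ → IsIrrChar G φ → χ ≠ φ →
    ∃ (H : Subgroup G), H.Normal ∧ ∃ l : H → ℂ, IsLinearChar H l ∧
      cdot G (ind H l) χ ≠ 0 ∧ cdot G (ind H l) φ = 0

/-- `G` is subnormally almost monomial. -/
def IsSubnormallyAlmostMonomial (G : Type*) [Group G] [Finite G] : Prop :=
  ∀ χ φ : G → ℂ, IsIrrChar G χ → IsIrrChar G φ → χ ≠ φ →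
    ∃ (H : Subgroup G), IsSubnormalSubgroup G H ∧ ∃ l : H → ℂ, IsLinearChar H l ∧
      cdot G (ind H l) χ ≠ 0 ∧ cdot G (ind H l) φ = 0

/-- `G` is quasi-monomial. -/
def IsQuasiMonomial (G : Type*) [Group G] [Finite G] : Prop :=
  ∀ χ : G → ℂ, IsIrrChar G χ → ∃ (H : Subgroup G) (l : H → ℂ) (d : ℕ),
    IsLinearChar H l ∧ 1 ≤ d ∧ ind H l = fun g => (d : ℂ) * χ g

/-- The set of irreducible characters of `G`. -/
def IrrSet (G : Type*) [Group G] [Finite G] : Set (G → ℂ) := {χ | IsIrrChar G χ}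

/-- `f` belongs to the semigroup `M(G)` generated by monomial characters. -/
def InMG (G : Type*) [Group G] [Finite G] (f : G → ℂ) : Prop :=
  ∃ (k : ℕ) (H : Fin (k + 1) → Subgroup G) (l : ∀ i, (H i) → ℂ),
    (∀ i, IsLinearChar (H i) (l i)) ∧ f = fun g => ∑ i, ind (H i) (l i) g

/-- The set of irreducible constituents of a class function `f`. -/
def Cons (G : Type*) [Group G] [Finite G] (f : G → ℂ) : Set (G → ℂ) :=
  {φ | IsIrrChar G φ ∧ cdot G φ f ≠ 0}

/-- `L_t(G)`: the number of constituent-sets of size `t` of characters in `M(G)`. -/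
def Lt (G : Type*) [Group G] [Finite G] (t : ℕ) : ℕ :=
  Nat.card {S : Set (G → ℂ) // ∃ f, InMG G f ∧ Cons G f = S ∧ Nat.card S = t}

end
noncomputable section Helpers

open Function

local notation "conj'" => (starRingEnd ℂ)

variable {G₁ G₂ : Type*} [Group G₁] [Group G₂]

lemma isChar_comp (q : G₁ →* G₂) {f : G₂ → ℂ} (hf : IsChar G₂ f) : IsChar G₁ (f ∘ q) := by
  obtain ⟨n, ρ, rfl⟩ := hf
  exact ⟨n, ρ.comp q, rfl⟩

def fiberEquivKer (p : G₁ →* G₂) {y : G₂} {x₀ : G₁} (h₀ : p x₀ = y) :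
    {x // p x = y} ≃ p.ker where
  toFun x := ⟨x₀⁻¹ * x.1, by simp [MonoidHom.mem_ker, h₀, x.2]⟩
  invFun k := ⟨x₀ * k.1, by
    have hk : p k.1 = 1 := k.2
    simp [hk, h₀]⟩
  left_inv x := by simp
  right_inv k := by simp

lemma card_eq_card_mul_card_ker [Finite G₁] (p : G₁ →* G₂) (hp : Surjective p) :
    Nat.card G₁ = Nat.card G₂ * Nat.card p.ker := by
  have : Finite G₂ := Finite.of_surjective p hp
  calc Nat.card G₁ = Nat.card ((G₁ ⧸ p.ker) × p.ker) :=
        Nat.card_congr Subgroup.groupEquivQuotientProdSubgroup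
    _ = Nat.card (G₁ ⧸ p.ker) * Nat.card p.ker := Nat.card_prod _ _
    _ = Nat.card G₂ * Nat.card p.ker := by
        rw [Nat.card_congr (QuotientGroup.quotientKerEquivOfSurjective p hp).toEquiv]

lemma sum_comp_surj [Finite G₁] (p : G₁ →* G₂) (hp : Surjective p) (F : G₂ → ℂ) :
    ∑ᶠ x : G₁, F (p x) = (Nat.card p.ker : ℂ) * ∑ᶠ y : G₂, F y := by
  have : Finite G₂ := Finite.of_surjective p hp
  have : Fintype G₁ := Fintype.ofFinite _
  have : Fintype G₂ := Fintype.ofFinite _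
  rw [finsum_eq_sum_of_fintype, finsum_eq_sum_of_fintype]
  rw [← (Equiv.sigmaFiberEquiv p).sum_comp (fun x => F (p x))]
  rw [← Finset.univ_sigma_univ, Finset.sum_sigma]
  have hfib : ∀ y : G₂, ∑ x : {x // p x = y}, F (p ((Equiv.sigmaFiberEquiv p) ⟨y, x⟩))
      = (Nat.card p.ker : ℂ) * F y := by
    intro y
    obtain ⟨x₀, h₀⟩ := hp y
    have : ∀ x : {x // p x = y}, F (p ((Equiv.sigmaFiberEquiv p) ⟨y, x⟩)) = F y := by
      intro x; simp [Equiv.sigmaFiberEquiv, x.2]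
    rw [Finset.sum_congr rfl (fun x _ => this x), Finset.sum_const]
    have : Fintype.card {x // p x = y} = Nat.card p.ker := by
      rw [← Nat.card_eq_fintype_card]
      exact Nat.card_congr (fiberEquivKer p h₀)
    simp [this, mul_comm]
  rw [Finset.sum_congr rfl (fun y _ => hfib y), ← Finset.mul_sum]

lemma cdot_comp [Finite G₁] [Finite G₂] (p : G₁ →* G₂) (hp : Surjective p) (f g : G₂ → ℂ) :
    cdot G₁ (f ∘ p) (g ∘ p) = cdot G₂ f g := by
  have hk : (Nat.card p.ker : ℂ) ≠ 0 := by
    exact_mod_cast (Nat.card_pos (α := p.ker)).ne'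
  unfold cdot
  have h1 : ∑ᶠ x : G₁, (f ∘ p) x * conj' ((g ∘ p) x)
      = (Nat.card p.ker : ℂ) * ∑ᶠ y : G₂, f y * conj' (g y) :=
    sum_comp_surj p hp (fun y => f y * conj' (g y))
  have key : ∀ S : ℂ, ((Nat.card G₂ : ℂ) * (Nat.card p.ker : ℂ))⁻¹ * ((Nat.card p.ker : ℂ) * S)
      = (Nat.card G₂ : ℂ)⁻¹ * S := by
    intro S
    rw [mul_inv]
    have h2 : (Nat.card G₂ : ℂ)⁻¹ * (Nat.card p.ker : ℂ)⁻¹ * ((Nat.card p.ker : ℂ) * S)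
        = ((Nat.card p.ker : ℂ)⁻¹ * (Nat.card p.ker : ℂ)) * ((Nat.card G₂ : ℂ)⁻¹ * S) := by ring
    rw [h2, inv_mul_cancel₀ hk, one_mul]
  rw [h1, card_eq_card_mul_card_ker p hp]
  push_cast
  exact key _

lemma comp_left_injective {X Y : Type*} {p : X → Y} (hp : Surjective p) :
    Injective (fun f : Y → ℂ => f ∘ p) := by
  intro f g hfg
  funext y
  obtain ⟨x, rfl⟩ := hp y
  exact congrFun hfg x

lemma isChar_conj_inv {G : Type*} [Group G] {χ : G → ℂ} (hχ : IsChar G χ) (x g : G) :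
    χ (x * g * x⁻¹) = χ g := by
  obtain ⟨n, ρ, rfl⟩ := hχ
  show Matrix.trace _ = Matrix.trace _
  have h1 : ρ (x * g * x⁻¹) = ρ x * ρ g * ρ x⁻¹ := by rw [map_mul, map_mul]
  rw [h1, Units.val_mul, Matrix.trace_mul_comm, ← Units.val_mul]
  have h2 : ρ x⁻¹ * (ρ x * ρ g) = ρ g := by
    rw [← map_mul, ← map_mul, inv_mul_cancel_left]
  rw [h2]

end Helpers
noncomputable section Helpers2

open Function

local notation "conj'" => (starRingEnd ℂ)

variable {G : Type*} [Group G]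

lemma sum_dite_subgroup [Fintype G] (H : Subgroup G) (F : H → ℂ) :
    ∑ g : G, (if h : g ∈ H then F ⟨g, h⟩ else 0) = ∑ y : H, F y := by
  classical
  have step : ∀ g : G, (if h : g ∈ H then F ⟨g, h⟩ else 0)
      = ∑ y : H, if (y : G) = g then F y else 0 := by
    intro g
    by_cases h : g ∈ H
    · rw [dif_pos h, Finset.sum_eq_single (⟨g, h⟩ : H)]
      · simp
      · intro y _ hy
        rw [if_neg]
        exact fun e => hy (Subtype.ext e)
      · intro hy
        exact absurd (Finset.mem_univ _) hy
    · rw [dif_neg h]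
      symm
      apply Finset.sum_eq_zero
      intro y _
      rw [if_neg]
      exact fun e => h (e ▸ y.2)
  rw [Finset.sum_congr rfl (fun g _ => step g), Finset.sum_comm]
  apply Finset.sum_congr rfl
  intro y _
  simp

/-- conjugation as an equivalence -/
def conjEquiv (x : G) : G ≃ G where
  toFun k := x⁻¹ * k * x
  invFun g := x * g * x⁻¹
  left_inv k := by group
  right_inv g := by group

lemma frobeniusRecip [Finite G] (H : Subgroup G) (f : H → ℂ) (χ : G → ℂ)
    (hχ : ∀ x g : G, χ (x * g * x⁻¹) = χ g) :
    cdot G (ind H f) χ = cdot H f (res H χ) := by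
  have : Fintype G := Fintype.ofFinite _
  classical
  have hG : (Nat.card G : ℂ) ≠ 0 := by exact_mod_cast (Nat.card_pos (α := G)).ne'
  unfold cdot ind res
  rw [finsum_eq_sum_of_fintype, finsum_eq_sum_of_fintype]
  have hterm : ∀ g : G,
      ((Nat.card H : ℂ)⁻¹ * ∑ᶠ x : G, (if h : x * g * x⁻¹ ∈ H then f ⟨x * g * x⁻¹, h⟩ else 0))
        * conj' (χ g)
      = (Nat.card H : ℂ)⁻¹ *
          ∑ x : G, (if h : x * g * x⁻¹ ∈ H then f ⟨x * g * x⁻¹, h⟩ else 0) * conj' (χ g) := by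
    intro g
    rw [finsum_eq_sum_of_fintype, mul_assoc, Finset.sum_mul]
  rw [Finset.sum_congr rfl (fun g _ => hterm g), ← Finset.mul_sum, Finset.sum_comm]
  have hinner : ∀ x : G,
      (∑ g : G, (if h : x * g * x⁻¹ ∈ H then f ⟨x * g * x⁻¹, h⟩ else 0) * conj' (χ g))
      = ∑ y : H, f y * conj' (χ (y : G)) := by
    intro x
    rw [← (conjEquiv x).sum_comp
      (fun g : G => (if h : x * g * x⁻¹ ∈ H then f ⟨x * g * x⁻¹, h⟩ else 0) * conj' (χ g))]
    have hxk : ∀ k : G, x * (conjEquiv x k) * x⁻¹ = k := by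
      intro k
      show x * (x⁻¹ * k * x) * x⁻¹ = k
      group
    have hck : ∀ k : G, χ (conjEquiv x k) = χ k := by
      intro k
      show χ (x⁻¹ * k * x) = χ k
      have := hχ x⁻¹ k
      rwa [inv_inv] at this
    have hstep : ∀ k : G,
        (if h : x * (conjEquiv x k) * x⁻¹ ∈ H then f ⟨x * (conjEquiv x k) * x⁻¹, h⟩ else 0)
          * conj' (χ (conjEquiv x k))
        = (if h : k ∈ H then f ⟨k, h⟩ else 0) * conj' (χ k) := by
      intro k
      rw [hck, hxk k]
    rw [Finset.sum_congr rfl (fun k _ => hstep k)]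
    rw [← sum_dite_subgroup H (fun y => f y * conj' (χ (y : G)))]
    apply Finset.sum_congr rfl
    intro k _
    by_cases h : k ∈ H
    · rw [dif_pos h, dif_pos h]
    · rw [dif_neg h, dif_neg h, zero_mul]
  rw [Finset.sum_congr rfl (fun x _ => hinner x), Finset.sum_const, Finset.card_univ,
    ← Nat.card_eq_fintype_card]
  rw [nsmul_eq_mul]
  rw [show (Nat.card G : ℂ)⁻¹ * ((Nat.card H : ℂ)⁻¹ * ((Nat.card G : ℂ) *
      ∑ y : H, f y * conj' (χ (y : G))))
    = ((Nat.card G : ℂ)⁻¹ * (Nat.card G : ℂ)) * ((Nat.card H : ℂ)⁻¹ *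
      ∑ y : H, f y * conj' (χ (y : G))) from by ring]
  rw [inv_mul_cancel₀ hG, one_mul]

end Helpers2
noncomputable section Helpers3

open Function Matrix
open scoped ComplexOrder

variable {G : Type*} [Group G] {n : ℕ}

private lemma sum_mulVec' {ι : Type*} (s : Finset ι) (A : ι → Matrix (Fin n) (Fin n) ℂ)
    (x : Fin n → ℂ) : (∑ i ∈ s, A i) *ᵥ x = ∑ i ∈ s, A i *ᵥ x := by
  ext j
  simp only [Matrix.mulVec, dotProduct, Matrix.sum_apply, Finset.sum_apply,
    Finset.sum_mul]
  rw [Finset.sum_comm]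

private lemma dotProduct_sum' {ι : Type*} (s : Finset ι) (x : Fin n → ℂ) (v : ι → Fin n → ℂ) :
    (x ⬝ᵥ ∑ i ∈ s, v i) = ∑ i ∈ s, x ⬝ᵥ v i := by
  simp only [dotProduct, Finset.sum_apply, Finset.mul_sum]
  rw [Finset.sum_comm]

lemma trace_rho_inv_eq_conj [Finite G] (ρ : G →* GL (Fin n) ℂ) (g : G) :
    Matrix.trace ((ρ g⁻¹ : Matrix (Fin n) (Fin n) ℂ))
      = (starRingEnd ℂ) (Matrix.trace ((ρ g : Matrix (Fin n) (Fin n) ℂ))) := by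
  have : Fintype G := Fintype.ofFinite _
  classical
  set M : G → Matrix (Fin n) (Fin n) ℂ := fun h => ((ρ h : GL (Fin n) ℂ) : Matrix (Fin n) (Fin n) ℂ)
    with hMdef
  have hMmul : ∀ a b : G, M (a * b) = M a * M b := by
    intro a b
    rw [hMdef]
    show ((ρ (a * b) : GL (Fin n) ℂ) : Matrix (Fin n) (Fin n) ℂ) = _
    rw [_root_.map_mul, Units.val_mul]
  have hMone : M 1 = 1 := by simp [hMdef]
  set Q : Matrix (Fin n) (Fin n) ℂ := ∑ h : G, (M h)ᴴ * (M h) with hQdef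
  have hQpsd : ∀ h : G, ((M h)ᴴ * M h).PosSemidef := fun h =>
    posSemidef_conjTranspose_mul_self _
  have hQpos : Q.PosDef := by
    rw [posDef_iff_dotProduct_mulVec]
    constructor
    · show Qᴴ = Q
      rw [hQdef, conjTranspose_sum]
      exact Finset.sum_congr rfl fun h _ => (hQpsd h).1
    · intro x hx
      rw [hQdef, sum_mulVec', dotProduct_sum']
      have hpos : 0 < star x ⬝ᵥ ((M 1)ᴴ * M 1) *ᵥ x := by
        rw [hMone]
        simpa using dotProduct_star_self_pos_iff.mpr hx
      exact Finset.sum_pos' (fun h _ => (hQpsd h).dotProduct_mulVec_nonneg x) ⟨1, Finset.mem_univ 1, hpos⟩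
  open scoped MatrixOrder in
  set S : Matrix (Fin n) (Fin n) ℂ := CFC.sqrt Q with hSdef
  open scoped MatrixOrder in
  have hS2 : S * S = Q := CFC.sqrt_mul_sqrt_self Q hQpos.posSemidef.nonneg
  open scoped MatrixOrder in
  have hSh : S.IsHermitian := (CFC.sqrt_nonneg Q).posSemidef.1
  have hSdet : IsUnit S.det := by
    have hq : Q.det ≠ 0 := hQpos.det_pos.ne'
    have : S.det * S.det = Q.det := by rw [← det_mul, hS2]
    exact isUnit_iff_ne_zero.mpr (fun h0 => hq (by rw [← this, h0, mul_zero]))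
  have hSS : S⁻¹ * S = 1 := nonsing_inv_mul S hSdet
  have hSS' : S * S⁻¹ = 1 := mul_nonsing_inv S hSdet
  have hSinvh : S⁻¹ᴴ = S⁻¹ := by rw [conjTranspose_nonsing_inv, hSh.eq]
  have hQconj : ∀ g : G, (M g)ᴴ * Q * M g = Q := by
    intro g
    rw [hQdef, Finset.mul_sum, Finset.sum_mul]
    refine Fintype.sum_bijective (Equiv.mulRight g) (Equiv.bijective _) _ _ ?_
    intro h
    show (M g)ᴴ * ((M h)ᴴ * M h) * M g = (M (h * g))ᴴ * M (h * g)
    rw [hMmul, conjTranspose_mul]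
    simp only [Matrix.mul_assoc]
  set U : G → Matrix (Fin n) (Fin n) ℂ := fun g => S * M g * S⁻¹ with hUdef
  have hUunit : ∀ g : G, (U g)ᴴ * U g = 1 := by
    intro g
    have : (U g)ᴴ = S⁻¹ * (M g)ᴴ * S := by
      show (S * M g * S⁻¹)ᴴ = _
      rw [conjTranspose_mul, conjTranspose_mul, hSinvh, hSh.eq]
      simp only [Matrix.mul_assoc]
    rw [this]
    show S⁻¹ * (M g)ᴴ * S * (S * M g * S⁻¹) = 1
    calc S⁻¹ * (M g)ᴴ * S * (S * M g * S⁻¹)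
        = S⁻¹ * ((M g)ᴴ * (S * S) * M g) * S⁻¹ := by simp only [Matrix.mul_assoc]
      _ = S⁻¹ * Q * S⁻¹ := by rw [hS2, hQconj g]
      _ = S⁻¹ * (S * S) * S⁻¹ := by rw [hS2]
      _ = S⁻¹ * S * (S * S⁻¹) := by simp only [Matrix.mul_assoc]
      _ = 1 := by rw [hSS, hSS', Matrix.one_mul]
  have htrU : ∀ g : G, (U g).trace = (M g).trace := by
    intro g
    show (S * M g * S⁻¹).trace = (M g).trace
    rw [Matrix.trace_mul_cycle, hSS, Matrix.one_mul]
  have hUinv : ∀ g : G, U g⁻¹ = (U g)ᴴ := by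
    intro g
    have hab : U g * U g⁻¹ = 1 := by
      show S * M g * S⁻¹ * (S * M g⁻¹ * S⁻¹) = 1
      calc S * M g * S⁻¹ * (S * M g⁻¹ * S⁻¹)
          = S * (M g * (S⁻¹ * S) * M g⁻¹) * S⁻¹ := by simp only [Matrix.mul_assoc]
        _ = S * (M g * M g⁻¹) * S⁻¹ := by rw [hSS, Matrix.mul_one]
        _ = 1 := by rw [← hMmul, mul_inv_cancel, hMone, Matrix.mul_one, hSS']
    calc U g⁻¹ = ((U g)ᴴ * U g) * U g⁻¹ := by rw [hUunit, Matrix.one_mul]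
      _ = (U g)ᴴ * (U g * U g⁻¹) := by rw [Matrix.mul_assoc]
      _ = (U g)ᴴ := by rw [hab, Matrix.mul_one]
  calc (M g⁻¹).trace = (U g⁻¹).trace := (htrU g⁻¹).symm
    _ = ((U g)ᴴ).trace := by rw [hUinv]
    _ = star ((U g).trace) := trace_conjTranspose _
    _ = star ((M g).trace) := by rw [htrU]
    _ = (starRingEnd ℂ) ((M g).trace) := rfl

end Helpers3
noncomputable section Helpers4

open Function Matrix LinearMap

variable {n : ℕ}

private lemma stdBasis_repr' (X : Matrix (Fin n) (Fin n) ℂ) (p : Fin n × Fin n) :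
    (Matrix.stdBasis ℂ (Fin n) (Fin n)).repr X p = X p.1 p.2 := by
  obtain ⟨i, j⟩ := p
  simp [Matrix.stdBasis]

private lemma trace_mulLeft_comp_mulRight (M M' : Matrix (Fin n) (Fin n) ℂ) :
    LinearMap.trace ℂ (Matrix (Fin n) (Fin n) ℂ)
      (LinearMap.mulLeft ℂ M ∘ₗ LinearMap.mulRight ℂ M') = M.trace * M'.trace := by
  classical
  rw [LinearMap.trace_eq_matrix_trace ℂ (Matrix.stdBasis ℂ (Fin n) (Fin n))]
  have hdiag : ∀ p : Fin n × Fin n,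
      (LinearMap.toMatrix (Matrix.stdBasis ℂ (Fin n) (Fin n)) (Matrix.stdBasis ℂ (Fin n) (Fin n))
        (LinearMap.mulLeft ℂ M ∘ₗ LinearMap.mulRight ℂ M')) p p = M p.1 p.1 * M' p.2 p.2 := by
    intro p
    obtain ⟨i, j⟩ := p
    rw [LinearMap.toMatrix_apply, stdBasis_repr']
    rw [Matrix.stdBasis_eq_single]
    show ((M * (Matrix.single i j 1 * M') : Matrix (Fin n) (Fin n) ℂ)) i j
      = M i i * M' j j
    simp [Matrix.mul_apply, Matrix.single, ite_and, Finset.mul_sum]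
  rw [Matrix.trace]
  have hdiag' : ∀ p : Fin n × Fin n,
      (LinearMap.toMatrix (Matrix.stdBasis ℂ (Fin n) (Fin n)) (Matrix.stdBasis ℂ (Fin n) (Fin n))
        (LinearMap.mulLeft ℂ M ∘ₗ LinearMap.mulRight ℂ M')).diag p = M p.1 p.1 * M' p.2 p.2 :=
    fun p => hdiag p
  rw [Finset.sum_congr rfl (fun p _ => hdiag' p), Fintype.sum_prod_type]
  simp_rw [← Finset.mul_sum]
  rw [← Finset.sum_mul]
  rfl

private lemma trace_idem {V : Type*} [AddCommGroup V] [Module ℂ V] [FiniteDimensional ℂ V]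
    (T : V →ₗ[ℂ] V) (hT : T ∘ₗ T = T) :
    LinearMap.trace ℂ V T = (Module.finrank ℂ (LinearMap.range T) : ℂ) := by
  have hproj : LinearMap.IsProj (LinearMap.range T) T := by
    constructor
    · intro x
      exact LinearMap.mem_range_self T x
    · rintro x ⟨y, rfl⟩
      exact LinearMap.ext_iff.mp hT y
  exact hproj.trace

lemma comm_idem_eq_one {H : Type*} [Group H] [Finite H]
    (ρ : H →* GL (Fin n) ℂ)
    (hirr : cdot H (fun h => Matrix.trace ((ρ h : Matrix (Fin n) (Fin n) ℂ)))
        (fun h => Matrix.trace ((ρ h : Matrix (Fin n) (Fin n) ℂ))) = 1)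
    (P : Matrix (Fin n) (Fin n) ℂ)
    (hPcomm : ∀ h : H, (ρ h : Matrix (Fin n) (Fin n) ℂ) * P = P * (ρ h : Matrix (Fin n) (Fin n) ℂ))
    (hPidem : P * P = P) (hPne : P ≠ 0) : P = 1 := by
  rcases Nat.eq_zero_or_pos n with hn | hn
  · subst hn
    apply Subsingleton.elim
  have : Fintype H := Fintype.ofFinite _
  classical
  set M : H → Matrix (Fin n) (Fin n) ℂ := fun h => ((ρ h : GL (Fin n) ℂ) : Matrix (Fin n) (Fin n) ℂ)
    with hMdef
  have hMmul : ∀ a b : H, M (a * b) = M a * M b := by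
    intro a b
    rw [hMdef]
    show ((ρ (a * b) : GL (Fin n) ℂ) : Matrix (Fin n) (Fin n) ℂ) = _
    rw [_root_.map_mul, Units.val_mul]
  have hMone : M 1 = 1 := by simp [hMdef]
  have hMinv : ∀ a : H, M a * M a⁻¹ = 1 := by
    intro a
    rw [← hMmul, mul_inv_cancel, hMone]
  set c : ℂ := (Nat.card H : ℂ) with hcdef
  have hc : c ≠ 0 := by
    rw [hcdef]
    exact_mod_cast (Nat.card_pos (α := H)).ne'
  set T : Matrix (Fin n) (Fin n) ℂ →ₗ[ℂ] Matrix (Fin n) (Fin n) ℂ :=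
    c⁻¹ • ∑ h : H, (LinearMap.mulLeft ℂ (M h)) ∘ₗ (LinearMap.mulRight ℂ (M h⁻¹)) with hTdef
  have hTapp : ∀ B, T B = c⁻¹ • ∑ h : H, M h * B * M h⁻¹ := by
    intro B
    rw [hTdef]
    simp only [LinearMap.smul_apply, LinearMap.sum_apply, LinearMap.comp_apply,
      LinearMap.mulLeft_apply, LinearMap.mulRight_apply]
    rw [Finset.smul_sum]
    rw [Finset.smul_sum]
    apply Finset.sum_congr rfl
    intro h _
    rw [Matrix.mul_assoc]
  have hfix : ∀ B : Matrix (Fin n) (Fin n) ℂ,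
      (∀ h : H, M h * B = B * M h) → T B = B := by
    intro B hB
    rw [hTapp]
    have : ∀ h : H, M h * B * M h⁻¹ = B := by
      intro h
      rw [hB h, Matrix.mul_assoc, hMinv, Matrix.mul_one]
    rw [Finset.sum_congr rfl (fun h _ => this h), Finset.sum_const, Finset.card_univ]
    rw [← Nat.cast_smul_eq_nsmul ℂ, smul_smul, ← Nat.card_eq_fintype_card, ← hcdef,
      inv_mul_cancel₀ hc, one_smul]
  have hcomm : ∀ (B : Matrix (Fin n) (Fin n) ℂ) (g : H), M g * T B = T B * M g := by
    intro B g
    rw [hTapp]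
    rw [Matrix.mul_smul, Matrix.smul_mul]
    congr 1
    rw [Finset.mul_sum, Finset.sum_mul]
    refine Fintype.sum_bijective (Equiv.mulLeft g) (Equiv.bijective _) _ _ ?_
    intro h
    show M g * (M h * B * M h⁻¹) = M (g * h) * B * M (g * h)⁻¹ * M g
    rw [_root_.mul_inv_rev, hMmul, hMmul]
    have : M h⁻¹ * M g⁻¹ * M g = M h⁻¹ := by
      rw [Matrix.mul_assoc, ← hMmul, inv_mul_cancel, hMone, Matrix.mul_one]
    calc M g * (M h * B * M h⁻¹) = M g * M h * B * M h⁻¹ := by simp only [Matrix.mul_assoc]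
      _ = M g * M h * B * (M h⁻¹ * M g⁻¹ * M g) := by rw [this]
      _ = M g * M h * B * (M h⁻¹ * M g⁻¹) * M g := by simp only [Matrix.mul_assoc]
  have hTT : T ∘ₗ T = T := by
    apply LinearMap.ext
    intro B
    show T (T B) = T B
    exact hfix (T B) (fun h => hcomm B h)
  have htrace : LinearMap.trace ℂ _ T = 1 := by
    rw [hTdef, _root_.map_smul, map_sum]
    have : ∀ h : H, LinearMap.trace ℂ _ ((LinearMap.mulLeft ℂ (M h)) ∘ₗ
        (LinearMap.mulRight ℂ (M h⁻¹))) = (M h).trace * (M h⁻¹).trace :=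
      fun h => trace_mulLeft_comp_mulRight _ _
    rw [Finset.sum_congr rfl (fun h _ => this h)]
    have hconj : ∀ h : H, (M h⁻¹).trace = (starRingEnd ℂ) ((M h).trace) :=
      fun h => trace_rho_inv_eq_conj ρ h
    rw [Finset.sum_congr rfl (fun h _ => by rw [hconj h])]
    rw [← hirr]
    unfold cdot
    rw [finsum_eq_sum_of_fintype, ← hcdef, smul_eq_mul]
  have hrange1 : Module.finrank ℂ (LinearMap.range T) = 1 := by
    have := trace_idem T hTT
    rw [htrace] at this
    exact_mod_cast this.symm
  have hPmem : P ∈ LinearMap.range T := ⟨P, hfix P hPcomm⟩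
  have h1mem : (1 : Matrix (Fin n) (Fin n) ℂ) ∈ LinearMap.range T :=
    ⟨1, hfix 1 (fun h => by rw [Matrix.mul_one, Matrix.one_mul])⟩
  obtain ⟨v, hv0, hvall⟩ := finrank_eq_one_iff'.mp hrange1
  obtain ⟨a, ha⟩ := hvall ⟨P, hPmem⟩
  obtain ⟨b, hb⟩ := hvall ⟨(1 : Matrix (Fin n) (Fin n) ℂ), h1mem⟩
  have hb0 : b ≠ 0 := by
    intro h0
    rw [h0, zero_smul] at hb
    have : (1 : Matrix (Fin n) (Fin n) ℂ) = 0 := by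
      have := congrArg Subtype.val hb
      exact this.symm
    have i0 : Fin n := ⟨0, hn⟩
    have := congrFun (congrFun this i0) i0
    simp at this
  have hvv : (v : Matrix (Fin n) (Fin n) ℂ) = b⁻¹ • 1 := by
    have := congrArg Subtype.val hb
    have hv1 : b • (v : Matrix (Fin n) (Fin n) ℂ) = 1 := this
    rw [← hv1, smul_smul, inv_mul_cancel₀ hb0, one_smul]
  have hP1 : P = (a * b⁻¹) • (1 : Matrix (Fin n) (Fin n) ℂ) := by
    have := congrArg Subtype.val ha
    have hv2 : a • (v : Matrix (Fin n) (Fin n) ℂ) = P := this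
    rw [← hv2, hvv, smul_smul]
  set d : ℂ := a * b⁻¹ with hddef
  have hd : d * d = d := by
    have := hPidem
    rw [hP1] at this
    rw [smul_mul_assoc, Matrix.mul_smul, Matrix.mul_one, smul_smul] at this
    have i0 : Fin n := ⟨0, hn⟩
    have h2 := congrFun (congrFun this i0) i0
    simpa using h2
  have hd0 : d ≠ 0 := by
    intro h0
    rw [hP1, h0, zero_smul] at hPne
    exact hPne rfl
  have hdone : d = 1 := by
    have h2 : d * d = d * 1 := by rw [hd, mul_one]
    exact mul_left_cancel₀ hd0 h2
  rw [hP1, hdone, one_smul]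

end Helpers4
noncomputable section Helpers5

open Function Matrix

variable {n : ℕ}

/-- Conjugation by `g` as a permutation of a normal subgroup. -/
def conjSub {K : Type*} [Group K] (B : Subgroup K) (hBn : B.Normal) (g : K) : B ≃ B where
  toFun b := ⟨g * b.1 * g⁻¹, hBn.conj_mem b.1 b.2 g⟩
  invFun b := ⟨g⁻¹ * b.1 * g, by simpa using hBn.conj_mem b.1 b.2 g⁻¹⟩
  left_inv b := by
    apply Subtype.ext
    show g⁻¹ * (g * b.1 * g⁻¹) * g = b.1
    group
  right_inv b := by
    apply Subtype.ext
    show g * (g⁻¹ * b.1 * g) * g⁻¹ = b.1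
    group

private lemma coe_map_mul {K : Type*} [Group K] (ρ : K →* GL (Fin n) ℂ) (a b : K) :
    ((ρ (a * b) : GL (Fin n) ℂ) : Matrix (Fin n) (Fin n) ℂ)
      = ((ρ a : GL (Fin n) ℂ) : Matrix (Fin n) (Fin n) ℂ)
        * ((ρ b : GL (Fin n) ℂ) : Matrix (Fin n) (Fin n) ℂ) := by
  rw [_root_.map_mul, Units.val_mul]

lemma rho_one_of_cdot_ne {K : Type*} [Group K] [Finite K] (B : Subgroup K) (hBn : B.Normal)
    (ρ : K →* GL (Fin n) ℂ)
    (hirr : cdot K (fun x => Matrix.trace ((ρ x : Matrix (Fin n) (Fin n) ℂ)))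
        (fun x => Matrix.trace ((ρ x : Matrix (Fin n) (Fin n) ℂ))) = 1)
    (χ : K → ℂ) (hχB : ∀ b : K, b ∈ B → ∀ x : K, χ (b * x) = χ x)
    (hne : cdot K (fun x => Matrix.trace ((ρ x : Matrix (Fin n) (Fin n) ℂ))) χ ≠ 0) :
    ∀ b : K, b ∈ B → ρ b = 1 := by
  have : Fintype K := Fintype.ofFinite _
  have : Fintype B := Fintype.ofFinite _
  classical
  set M : K → Matrix (Fin n) (Fin n) ℂ := fun x => ((ρ x : GL (Fin n) ℂ) : Matrix (Fin n) (Fin n) ℂ)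
    with hMdef
  set ψ : K → ℂ := fun x => (M x).trace with hψdef
  set cB : ℂ := (Nat.card B : ℂ) with hcBdef
  have hcB : cB ≠ 0 := by
    rw [hcBdef]
    exact_mod_cast (Nat.card_pos (α := B)).ne'
  set P : Matrix (Fin n) (Fin n) ℂ := cB⁻¹ • ∑ b : B, M (b : K) with hPdef
  have hPcomm : ∀ g : K, M g * P = P * M g := by
    intro g
    rw [hPdef, Matrix.mul_smul, Matrix.smul_mul]
    congr 1
    rw [Finset.mul_sum, Finset.sum_mul]
    refine Fintype.sum_bijective (conjSub B hBn g) (Equiv.bijective _) _ _ ?_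
    intro b
    show ((ρ g : GL (Fin n) ℂ) : Matrix (Fin n) (Fin n) ℂ)
          * ((ρ (b : K) : GL (Fin n) ℂ) : Matrix (Fin n) (Fin n) ℂ)
        = ((ρ (g * (b : K) * g⁻¹) : GL (Fin n) ℂ) : Matrix (Fin n) (Fin n) ℂ)
          * ((ρ g : GL (Fin n) ℂ) : Matrix (Fin n) (Fin n) ℂ)
    rw [← coe_map_mul, ← coe_map_mul]
    congr 1
    group
  have hPabsorb : ∀ b : B, M (b : K) * P = P := by
    intro b
    rw [hPdef, Matrix.mul_smul]
    congr 1
    rw [Finset.mul_sum]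
    refine Fintype.sum_bijective (Equiv.mulLeft b) (Equiv.bijective _) _ _ ?_
    intro b'
    show M (b : K) * M (b' : K) = M ((b * b' : B) : K)
    exact (coe_map_mul ρ (b : K) (b' : K)).symm
  have hPidem : P * P = P := by
    rw [hPdef, Matrix.smul_mul]
    rw [Finset.sum_mul]
    have : ∀ b : B, M (b : K) * (cB⁻¹ • ∑ b' : B, M (b' : K)) = cB⁻¹ • ∑ b' : B, M (b' : K) := by
      intro b
      have := hPabsorb b
      rw [hPdef] at this
      exact this
    rw [Finset.sum_congr rfl (fun b _ => this b), Finset.sum_const, Finset.card_univ]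
    rw [← Nat.cast_smul_eq_nsmul ℂ, smul_smul, ← Nat.card_eq_fintype_card, ← hcBdef,
      inv_mul_cancel₀ hcB, one_smul]
  have htrP : ∀ x : K, (P * M x).trace = cB⁻¹ * ∑ b : B, ψ ((b : K) * x) := by
    intro x
    rw [hPdef, Matrix.smul_mul, Matrix.trace_smul, Finset.sum_mul, Matrix.trace_sum]
    rw [smul_eq_mul]
    congr 1
    apply Finset.sum_congr rfl
    intro b _
    rw [hψdef]
    exact congrArg Matrix.trace (coe_map_mul ρ (b : K) x).symm
  have hstep : ∀ b : B, ∑ x : K, ψ ((b : K) * x) * (starRingEnd ℂ) (χ x)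
      = ∑ x : K, ψ x * (starRingEnd ℂ) (χ x) := by
    intro b
    have h1 : ∀ x : K, ψ ((b : K) * x) * (starRingEnd ℂ) (χ x)
        = ψ ((b : K) * x) * (starRingEnd ℂ) (χ ((b : K) * x)) := by
      intro x
      rw [hχB (b : K) b.2 x]
    rw [Finset.sum_congr rfl (fun x _ => h1 x)]
    refine Fintype.sum_bijective (Equiv.mulLeft (b : K)) (Equiv.bijective _) _ _ ?_
    intro x
    rfl
  have hsum : ∑ x : K, (P * M x).trace * (starRingEnd ℂ) (χ x)
      = ∑ x : K, ψ x * (starRingEnd ℂ) (χ x) := by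
    rw [Finset.sum_congr rfl (fun x _ => by rw [htrP x])]
    have h1 : ∀ x : K, (cB⁻¹ * ∑ b : B, ψ ((b : K) * x)) * (starRingEnd ℂ) (χ x)
        = cB⁻¹ * ∑ b : B, ψ ((b : K) * x) * (starRingEnd ℂ) (χ x) := by
      intro x
      rw [mul_assoc, Finset.sum_mul]
    rw [Finset.sum_congr rfl (fun x _ => h1 x), ← Finset.mul_sum, Finset.sum_comm]
    rw [Finset.sum_congr rfl (fun b _ => hstep b), Finset.sum_const, Finset.card_univ]
    rw [← Nat.cast_smul_eq_nsmul ℂ, ← Nat.card_eq_fintype_card, ← hcBdef, smul_eq_mul,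
      ← mul_assoc, inv_mul_cancel₀ hcB, one_mul]
  have hPne : P ≠ 0 := by
    intro h0
    apply hne
    unfold cdot
    rw [finsum_eq_sum_of_fintype]
    have : ∑ x : K, ψ x * (starRingEnd ℂ) (χ x) = 0 := by
      rw [← hsum, h0]
      apply Finset.sum_eq_zero
      intro x _
      rw [Matrix.zero_mul, Matrix.trace_zero, zero_mul]
    rw [hψdef] at this
    rw [this, mul_zero]
  have hP1 : P = 1 := comm_idem_eq_one ρ hirr P hPcomm hPidem hPne
  intro b hb
  have habs := hPabsorb ⟨b, hb⟩
  rw [hP1, Matrix.mul_one] at habs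
  have hb1 : ((ρ b : GL (Fin n) ℂ) : Matrix (Fin n) (Fin n) ℂ) = 1 := habs
  apply Units.ext
  exact hb1.trans (Units.val_one (α := Matrix (Fin n) (Fin n) ℂ)).symm

end Helpers5
theorem stmt14 (G : Type*) [Group G] [Finite G] (N A : Subgroup G) [N.Normal] [A.Normal]
    (hAN : A ≤ N) (h : IsRelAlmostMonomial G N) :
    IsRelAlmostMonomial (G ⧸ A) (N.map (QuotientGroup.mk' A)) := by
  intro χq φq hχq hφq hne
  classical
  set p : G →* G ⧸ A := QuotientGroup.mk' A with hpdef
  have hpsurj : Function.Surjective p := QuotientGroup.mk'_surjective A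
  have hχ : IsIrrChar G (χq ∘ p) :=
    ⟨isChar_comp p hχq.1, by rw [cdot_comp p hpsurj]; exact hχq.2⟩
  have hφ : IsIrrChar G (φq ∘ p) :=
    ⟨isChar_comp p hφq.1, by rw [cdot_comp p hpsurj]; exact hφq.2⟩
  have hneq : χq ∘ p ≠ φq ∘ p := fun e => hne (comp_left_injective hpsurj e)
  obtain ⟨H, hNH, ψ, hψirr, hψN, hχne, hφ0⟩ := h _ _ hχ hφ hneq
  have hAH : A ≤ H := le_trans hAN hNH
  have hpA : ∀ a : G, a ∈ A → p a = 1 := by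
    intro a ha
    exact (QuotientGroup.eq_one_iff a).mpr ha
  obtain ⟨n, ρ, hρ⟩ := hψirr.1
  -- Step 1: ρ is trivial on A
  have hBn : (A.subgroupOf H).Normal := Subgroup.Normal.subgroupOf (by infer_instance) H
  have hχHB : ∀ b : H, b ∈ A.subgroupOf H → ∀ x : H,
      res H (χq ∘ p) (b * x) = res H (χq ∘ p) x := by
    intro b hb x
    show (χq ∘ p) ((b : G) * (x : G)) = (χq ∘ p) (x : G)
    show χq (p ((b : G) * (x : G))) = χq (p (x : G))
    rw [map_mul, hpA (b : G) (Subgroup.mem_subgroupOf.mp hb), one_mul]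
  have hcls : ∀ x g : G, (χq ∘ p) (x * g * x⁻¹) = (χq ∘ p) g := isChar_conj_inv hχ.1
  have hirr' : cdot H (fun x => Matrix.trace ((ρ x : Matrix (Fin n) (Fin n) ℂ)))
      (fun x => Matrix.trace ((ρ x : Matrix (Fin n) (Fin n) ℂ))) = 1 := by
    rw [← hρ]
    exact hψirr.2
  have hne' : cdot H (fun x => Matrix.trace ((ρ x : Matrix (Fin n) (Fin n) ℂ)))
      (res H (χq ∘ p)) ≠ 0 := by
    rw [← hρ, ← frobeniusRecip H ψ (χq ∘ p) hcls]
    exact hχne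
  have hker : ∀ b : H, b ∈ A.subgroupOf H → ρ b = 1 :=
    rho_one_of_cdot_ne (A.subgroupOf H) hBn ρ hirr' (res H (χq ∘ p)) hχHB hne'
  -- Step 2: the quotient data
  set Hq : Subgroup (G ⧸ A) := H.map p with hHqdef
  set pH : H →* Hq := p.subgroupMap H with hpHdef
  have hpHsurj : Function.Surjective pH := p.subgroupMap_surjective H
  have hpHval : ∀ x : H, ((pH x : Hq) : G ⧸ A) = p (x : G) := fun x => rfl
  have hkerpH : ∀ x : H, pH x = 1 ↔ (x : G) ∈ A := by
    intro x
    rw [← QuotientGroup.eq_one_iff (x : G)]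
    constructor
    · intro hx
      have := congrArg (fun y : Hq => (y : G ⧸ A)) hx
      exact this
    · intro hx
      apply Subtype.ext
      exact hx
  have hliftcond : ∀ x : H, x ∈ pH.ker → ρ x = 1 := by
    intro x hx
    exact hker x (Subgroup.mem_subgroupOf.mpr ((hkerpH x).mp hx))
  set ρ' : H ⧸ pH.ker →* Matrix.GeneralLinearGroup (Fin n) ℂ :=
    QuotientGroup.lift pH.ker ρ hliftcond with hρ'def
  set iso : (H ⧸ pH.ker) ≃* Hq := QuotientGroup.quotientKerEquivOfSurjective pH hpHsurj
    with hisodef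
  set ρq : Hq →* Matrix.GeneralLinearGroup (Fin n) ℂ := ρ'.comp iso.symm.toMonoidHom
    with hρqdef
  have hisomk : ∀ x : H, iso (QuotientGroup.mk x) = pH x := fun x =>
    QuotientGroup.kerLift_mk pH x
  have hρqpH : ∀ x : H, ρq (pH x) = ρ x := by
    intro x
    have h1 : iso.symm (pH x) = QuotientGroup.mk x := by
      rw [← hisomk x, MulEquiv.symm_apply_apply]
    show ρ' (iso.symm (pH x)) = ρ x
    rw [h1]
    exact QuotientGroup.lift_mk' pH.ker hliftcond x
  set ψq : Hq → ℂ := fun y => Matrix.trace ((ρq y : Matrix (Fin n) (Fin n) ℂ)) with hψqdef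
  have hψqpH : ∀ x : H, ψq (pH x) = ψ x := by
    intro x
    show Matrix.trace ((ρq (pH x) : Matrix (Fin n) (Fin n) ℂ)) = ψ x
    rw [hρqpH x, hρ]
  have hψqcomp : ψq ∘ pH = ψ := funext hψqpH
  -- membership: p w ∈ Hq ↔ w ∈ H
  have hmem : ∀ w : G, p w ∈ Hq ↔ w ∈ H := by
    intro w
    constructor
    · intro hw
      have h1 : w ∈ Subgroup.comap p (Subgroup.map p H) := hw
      rw [Subgroup.comap_map_eq] at h1
      have h2 : p.ker = A := QuotientGroup.ker_mk' A
      rw [h2, sup_of_le_left hAH] at h1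
      exact h1
    · intro hw
      exact Subgroup.mem_map_of_mem p hw
  -- cardinalities
  have hkercard : Nat.card pH.ker = Nat.card A := by
    refine Nat.card_congr ⟨fun k => ⟨(k.1 : G), (hkerpH k.1).mp k.2⟩,
      fun a => ⟨⟨(a : G), hAH a.2⟩, (hkerpH _).mpr a.2⟩, ?_, ?_⟩
    · intro k
      apply Subtype.ext
      apply Subtype.ext
      rfl
    · intro a
      rfl
  have hcardH : Nat.card H = Nat.card Hq * Nat.card A := by
    rw [← hkercard]
    exact card_eq_card_mul_card_ker pH hpHsurj
  have hcardA : ((Nat.card A : ℂ)) ≠ 0 := by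
    exact_mod_cast (Nat.card_pos (α := A)).ne'
  -- the induction lifts
  have hindlift : (ind Hq ψq) ∘ p = ind H ψ := by
    funext g
    show ind Hq ψq (p g) = ind H ψ g
    unfold ind
    have hsum := sum_comp_surj p hpsurj
      (fun y => if hh : y * p g * y⁻¹ ∈ Hq then ψq ⟨y * p g * y⁻¹, hh⟩ else 0)
    have hkerp : Nat.card p.ker = Nat.card A := by
      have : p.ker = A := QuotientGroup.ker_mk' A
      rw [this]
    rw [hkerp] at hsum
    have hterm : ∀ x : G,
        (if hh : p x * p g * (p x)⁻¹ ∈ Hq then ψq ⟨p x * p g * (p x)⁻¹, hh⟩ else 0)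
        = (if hh : x * g * x⁻¹ ∈ H then ψ ⟨x * g * x⁻¹, hh⟩ else 0) := by
      intro x
      have hpm : p x * p g * (p x)⁻¹ = p (x * g * x⁻¹) := by
        rw [map_mul, map_mul, map_inv]
      rw [hpm]
      by_cases hw : x * g * x⁻¹ ∈ H
      · rw [dif_pos ((hmem _).mpr hw), dif_pos hw]
        have : (⟨p (x * g * x⁻¹), (hmem _).mpr hw⟩ : Hq) = pH ⟨x * g * x⁻¹, hw⟩ :=
          Subtype.ext rfl
        rw [this, hψqpH]
      · rw [dif_neg (fun hc => hw ((hmem _).mp hc)), dif_neg hw]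
    have hsum2 : ∑ᶠ x : G,
        (if hh : p x * p g * (p x)⁻¹ ∈ Hq then ψq ⟨p x * p g * (p x)⁻¹, hh⟩ else 0)
        = ∑ᶠ x : G, (if hh : x * g * x⁻¹ ∈ H then ψ ⟨x * g * x⁻¹, hh⟩ else 0) :=
      finsum_congr hterm
    rw [hsum2] at hsum
    -- hsum : ∑ᶠ x : G, dite(H) = cardA * ∑ᶠ y, dite(Hq)
    have hy : ∑ᶠ y : G ⧸ A, (if hh : y * p g * y⁻¹ ∈ Hq then ψq ⟨y * p g * y⁻¹, hh⟩ else 0)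
        = (Nat.card A : ℂ)⁻¹ * ∑ᶠ x : G, (if hh : x * g * x⁻¹ ∈ H then ψ ⟨x * g * x⁻¹, hh⟩ else 0) := by
      rw [hsum, ← mul_assoc, inv_mul_cancel₀ hcardA, one_mul]
    rw [hy, hcardH]
    push_cast
    rw [mul_inv]
    ring
  -- the conclusion
  have hcχ : cdot (G ⧸ A) (ind Hq ψq) χq = cdot G (ind H ψ) (χq ∘ p) := by
    rw [← cdot_comp p hpsurj (ind Hq ψq) χq, hindlift]
  have hcφ : cdot (G ⧸ A) (ind Hq ψq) φq = cdot G (ind H ψ) (φq ∘ p) := by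
    rw [← cdot_comp p hpsurj (ind Hq ψq) φq, hindlift]
  have hNqHq : N.map (QuotientGroup.mk' A) ≤ Hq := Subgroup.map_mono hNH
  refine ⟨Hq, hNqHq, ψq, ⟨⟨n, ρq, rfl⟩, ?_⟩, ⟨?_, ?_⟩, ?_, ?_⟩
  · -- cdot Hq ψq ψq = 1
    rw [← cdot_comp pH hpHsurj ψq ψq, hψqcomp]
    exact hψirr.2
  · -- IsChar of restriction
    refine ⟨n, ρq.comp (Subgroup.inclusion hNqHq), ?_⟩
    funext y
    show ψq ⟨y.1, hNqHq y.2⟩ = Matrix.trace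
      ((ρq (Subgroup.inclusion hNqHq y) : Matrix (Fin n) (Fin n) ℂ))
    have : (⟨y.1, hNqHq y.2⟩ : Hq) = Subgroup.inclusion hNqHq y :=
      Subtype.ext (Subgroup.coe_inclusion hNqHq y).symm
    rw [this]
  · -- cdot of restriction = 1
    set pN : N →* N.map (QuotientGroup.mk' A) := p.subgroupMap N with hpNdef
    have hpNsurj : Function.Surjective pN := p.subgroupMap_surjective N
    have hres : (resTo hNqHq ψq) ∘ pN = resTo hNH ψ := by
      funext x
      show ψq ⟨((pN x : N.map (QuotientGroup.mk' A)) : G ⧸ A), hNqHq (pN x).2⟩ = ψ ⟨x.1, hNH x.2⟩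
      have : (⟨((pN x : N.map (QuotientGroup.mk' A)) : G ⧸ A), hNqHq (pN x).2⟩ : Hq)
          = pH ⟨x.1, hNH x.2⟩ := Subtype.ext rfl
      rw [this, hψqpH]
    rw [← cdot_comp pN hpNsurj (resTo hNqHq ψq) (resTo hNqHq ψq), hres]
    exact hψN.2
  · rw [hcχ]
    exact hχne
  · rw [hcφ]
    exact hφ0
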